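/- Let K be a field of characteristic 0, n ≥ 2, and K_n = K[x_1^{±1},...,x_n^{±1}] the Laurent polynomial algebra. The K-linear map Δ : K_n → K_n defined by Δ(u) = Σ_{i=1}^n x_i·∂_i(u) + (n/(1−n))·u is a derivation of the n-Lie algebra (K_n, Jac_n^S), i.e. Δ(Jac_n^S(u_1,...,u_n)) = Σ_{l=1}^n Jac_n^S(u_1,...,u_{l−1}, Δ(u_l), u_{l+1},...,u_n) for all u_1,...,u_n ∈ K_n. -/

import Mathlib

open Finset

/-- The Laurent polynomial algebra `K[x_1^{±1},…,x_n^{±1}]`, realized as the group algebra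
of `ℤ^n` over `K`. -/
abbrev Laurent (K : Type*) [Field K] (n : ℕ) : Type _ := AddMonoidAlgebra K (Fin n → ℤ)

/-- The monomial `x^α`. -/
noncomputable def lmon {K : Type*} [Field K] {n : ℕ} (α : Fin n → ℤ) : Laurent K n :=
  AddMonoidAlgebra.single α 1

/-- The partial derivative `∂_i`, with `∂_i(x^α) = α_i x^{α − ε_i}`. -/
noncomputable def lpd {K : Type*} [Field K] {n : ℕ} (i : Fin n) (u : Laurent K n) :
    Laurent K n :=
  Finsupp.sum u.coeff fun α c => AddMonoidAlgebra.single (α - Pi.single i 1) ((α i : K) * c)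

/-- The Jacobian `Jac_n^S(u_1,…,u_n) = det(∂_i u_j)` on Laurent polynomials. -/
noncomputable def ljac {K : Type*} [Field K] {n : ℕ} (u : Fin n → Laurent K n) : Laurent K n :=
  Matrix.det (Matrix.of fun i j => lpd i (u j))

/-- The linear map `Δ(u) = Σ_i x_i·∂_i(u) + (n/(1−n))·u` on Laurent polynomials. -/
noncomputable def lDelta {K : Type*} [Field K] {n : ℕ} (u : Laurent K n) : Laurent K n :=
  (∑ i : Fin n, lmon (Pi.single i 1) * lpd i u) + ((n : K) / (1 - (n : K))) • u

section aux
variable {K : Type*} [Field K] {n : ℕ}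

/-- `lpd` as a linear map. -/
noncomputable def lpdL (i : Fin n) : Laurent K n →ₗ[K] Laurent K n :=
  (Finsupp.lsum K fun α : Fin n → ℤ => (α i : K) • AddMonoidAlgebra.lsingle (α - Pi.single i 1)) ∘ₗ
    (AddMonoidAlgebra.coeffLinearEquiv K).toLinearMap

lemma lpd_eq (i : Fin n) (u : Laurent K n) : lpd i u = lpdL i u := by
  rw [lpd, lpdL, LinearMap.comp_apply]
  erw [Finsupp.lsum_apply]
  refine Finsupp.sum_congr fun α _ => ?_
  show AddMonoidAlgebra.single (α - Pi.single i 1) ((α i : K) * u.coeff α)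
      = (α i : K) • AddMonoidAlgebra.single (α - Pi.single i 1) (u.coeff α)
  rw [AddMonoidAlgebra.smul_single']

/-- `lDelta` as a linear map. -/
noncomputable def lDeltaL : Laurent K n →ₗ[K] Laurent K n :=
  (∑ i : Fin n, (LinearMap.mulLeft K (lmon (Pi.single i 1))).comp (lpdL i)) +
    ((n : K) / (1 - (n : K))) • LinearMap.id

lemma lDelta_eq (u : Laurent K n) : lDelta u = lDeltaL u := by
  simp [lDelta, lDeltaL, lpd_eq, LinearMap.sum_apply]

lemma prod_smul_gen {ι A : Type*} [CommRing A] [Algebra K A] (s : Finset ι) (c : ι → K)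
    (f : ι → A) : (∏ i ∈ s, c i • f i) = (∏ i ∈ s, c i) • ∏ i ∈ s, f i := by
  classical
  induction s using Finset.induction with
  | empty => simp
  | insert _ _ h ih => rw [Finset.prod_insert h, Finset.prod_insert h, Finset.prod_insert h, ih,
      smul_mul_smul_comm]

/-- `ljac` as a multilinear map. -/
noncomputable def ljacM : MultilinearMap K (fun _ : Fin n => Laurent K n) (Laurent K n) :=
  (Matrix.detRowAlternating :
      (Fin n → Laurent K n) [⋀^Fin n]→ₗ[Laurent K n] Laurent K n).toMultilinearMap.restrictScalars K
    |>.compLinearMap fun _ => LinearMap.pi fun i => lpdL i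

lemma ljac_eq (u : Fin n → Laurent K n) : ljac u = ljacM u := by
  rw [ljac, ← Matrix.det_transpose]
  simp only [ljacM, MultilinearMap.compLinearMap_apply, MultilinearMap.coe_restrictScalars,
    AlternatingMap.coe_multilinearMap]
  rw [Matrix.detRowAlternating]
  congr 1
  ext j i
  simp [Matrix.transpose, lpd_eq, LinearMap.pi_apply]

lemma lmon_mul (a b : Fin n → ℤ) : (lmon a : Laurent K n) * lmon b = lmon (a + b) := by
  simp [lmon, AddMonoidAlgebra.single_mul_single]

lemma lpd_lmon (i : Fin n) (α : Fin n → ℤ) :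
    lpd i (lmon α : Laurent K n) = (α i : K) • lmon (α - Pi.single i 1) := by
  rw [lpd, lmon, AddMonoidAlgebra.coeff_single]
  rw [Finsupp.sum_single_index (by simp)]
  simp [AddMonoidAlgebra.smul_single, lmon]

lemma lDelta_lmon (α : Fin n → ℤ) :
    lDelta (lmon α : Laurent K n)
      = (((∑ i, α i : ℤ) : K) + (n : K) / (1 - (n : K))) • lmon α := by
  rw [lDelta]
  have h : ∀ i : Fin n, lmon (Pi.single i 1) * lpd i (lmon α : Laurent K n)
      = (α i : K) • lmon α := by
    intro i
    rw [lpd_lmon, mul_smul_comm, lmon_mul]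
    congr 2
    abel
  rw [Finset.sum_congr rfl fun i _ => h i, ← Finset.sum_smul, add_smul]
  congr 1
  push_cast
  rfl

lemma ljac_lmon (v : Fin n → Fin n → ℤ) :
    ljac (fun j => (lmon (v j) : Laurent K n))
      = (Matrix.det (Matrix.of fun i j => (v j i : K))) •
          lmon (((∑ j, v j) - fun _ => 1 : Fin n → ℤ)) := by
  rw [ljac, Matrix.det_apply, Matrix.det_apply, Finset.sum_smul]
  refine Finset.sum_congr rfl fun σ _ => ?_
  have h1 : ∀ i : Fin n, (Matrix.of fun i j => lpd i (lmon (v j) : Laurent K n)) (σ i) i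
      = (v i (σ i) : K) • lmon (v i - Pi.single (σ i) 1) := by
    intro i; simp [lpd_lmon]
  rw [Finset.prod_congr rfl fun i _ => h1 i]
  rw [prod_smul_gen]
  have h2 : (∏ i : Fin n, (lmon (v i - Pi.single (σ i) 1) : Laurent K n))
      = lmon (((∑ j, v j) - fun _ => 1 : Fin n → ℤ)) := by
    simp only [lmon, AddMonoidAlgebra.prod_single, Finset.prod_const_one]
    congr 1
    rw [Finset.sum_sub_distrib]
    congr 1
    rw [Equiv.sum_comp σ (fun i => (Pi.single i (1 : ℤ) : Fin n → ℤ))]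
    exact Finset.univ_sum_single (fun _ => (1 : ℤ))
  have hsx : ∀ x : Laurent K n,
      Equiv.Perm.sign σ • x = (((Equiv.Perm.sign σ : ℤ) : K)) • x := fun x => by
    rw [Units.smul_def, ← Int.cast_smul_eq_zsmul K]
  have hsk : (Equiv.Perm.sign σ • (∏ i : Fin n, (Matrix.of fun i j => ((v j i : K))) (σ i) i) : K)
      = ((Equiv.Perm.sign σ : ℤ) : K) * ∏ i : Fin n, (v i (σ i) : K) := by
    rw [Units.smul_def, zsmul_eq_mul]
    rfl
  rw [h2, hsx, hsk, mul_smul]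


/-- weight scalar identity -/
lemma scalar_key {K : Type*} [Field K] [CharZero K] {n : ℕ} (hn : 2 ≤ n)
    (v : Fin n → Fin n → ℤ) :
    ((∑ i, (((∑ j, v j) - fun _ => 1 : Fin n → ℤ)) i : ℤ) : K) + (n : K) / (1 - (n : K))
      = ∑ l, (((∑ i, v l i : ℤ) : K) + (n : K) / (1 - (n : K))) := by
  have h1 : (1 : K) - n ≠ 0 := by
    have h2 : (n : K) ≠ 1 := by exact_mod_cast (by omega : n ≠ 1)
    exact sub_ne_zero.mpr (Ne.symm h2)
  have hsum : (∑ i, (((∑ j, v j) - fun _ => 1 : Fin n → ℤ)) i) = (∑ l, ∑ i, v l i) - n := by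
    simp only [Pi.sub_apply, Finset.sum_apply, Finset.sum_sub_distrib, Finset.sum_const,
      Finset.card_univ, Fintype.card_fin, smul_eq_mul, nsmul_eq_mul, mul_one]
    rw [Finset.sum_comm]
  rw [hsum]
  push_cast
  rw [Finset.sum_add_distrib, Finset.sum_const, nsmul_eq_mul, Finset.card_univ,
    Fintype.card_fin]
  field_simp
  ring

/-- The monomial basis of the Laurent algebra. -/
noncomputable def lbasis {K : Type*} [Field K] {n : ℕ} : Module.Basis (Fin n → ℤ) K (Laurent K n) :=
  AddMonoidAlgebra.basis _ K

lemma basis_eq_lmon {K : Type*} [Field K] {n : ℕ} (a : Fin n → ℤ) :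
    (lbasis : Module.Basis (Fin n → ℤ) K (Laurent K n)) a = lmon a :=
  AddMonoidAlgebra.basis_apply K a

lemma key_multilinear {K : Type*} [Field K] [CharZero K] {n : ℕ} (hn : 2 ≤ n) :
    (lDeltaL.compMultilinearMap (ljacM) :
        MultilinearMap K (fun _ : Fin n => Laurent K n) (Laurent K n))
      = ∑ l : Fin n, (ljacM : MultilinearMap K (fun _ : Fin n => Laurent K n)
          (Laurent K n)).compLinearMap (fun i => if i = l then lDeltaL else LinearMap.id) := by
  apply Module.Basis.ext_multilinear (fun _ => lbasis)
  intro v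
  simp only [basis_eq_lmon]
  rw [LinearMap.compMultilinearMap_apply, MultilinearMap.sum_apply]
  simp only [MultilinearMap.compLinearMap_apply]
  have hL : lDeltaL (ljacM fun i => (lmon (v i) : Laurent K n))
      = (Matrix.det (Matrix.of fun i j => (v j i : K))) •
          (((∑ i, (((∑ j, v j) - fun _ => 1 : Fin n → ℤ)) i : ℤ) : K) + (n : K) / (1 - (n : K))) •
            lmon (((∑ j, v j) - fun _ => 1 : Fin n → ℤ)) := by
    rw [← ljac_eq, ljac_lmon, map_smul, ← lDelta_eq, lDelta_lmon]
  rw [hL]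
  have hR : ∀ l : Fin n,
      (ljacM fun i => (if i = l then lDeltaL else LinearMap.id) (lmon (v i) : Laurent K n))
        = (((∑ i, v l i : ℤ) : K) + (n : K) / (1 - (n : K))) •
            (Matrix.det (Matrix.of fun i j => (v j i : K))) •
              lmon (((∑ j, v j) - fun _ => 1 : Fin n → ℤ)) := by
    intro l
    have harg : (fun i => (if i = l then lDeltaL else LinearMap.id) (lmon (v i) : Laurent K n))
        = Function.update (fun j => (lmon (v j) : Laurent K n)) l
            (((((∑ i, v l i : ℤ) : K) + (n : K) / (1 - (n : K)))) • lmon (v l)) := by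
      funext i
      by_cases h : i = l
      · subst h
        rw [Function.update_self, if_pos rfl, ← lDelta_eq, lDelta_lmon]
      · rw [Function.update_of_ne h, if_neg h]
        rfl
    rw [harg, MultilinearMap.map_update_smul, Function.update_eq_self, ← ljac_eq, ljac_lmon]
  rw [Finset.sum_congr rfl fun l _ => hR l, ← Finset.sum_smul, ← scalar_key hn v,
    smul_comm]

end aux

/-- For `n ≥ 2` and char `K = 0`, the map `Δ = Σ_i x_i ∂_i + n/(1−n)` is a derivation of the
`n`-Lie algebra `(K_n, Jac_n^S)`. -/
theorem lDelta_is_jacobian_derivation {K : Type*} [Field K] [CharZero K] {n : ℕ}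
    (hn : 2 ≤ n) :
    ∀ u : Fin n → Laurent K n,
      lDelta (ljac u) = ∑ l : Fin n, ljac (Function.update u l (lDelta (u l))) := by
  intro u
  have h := DFunLike.congr_fun (key_multilinear (K := K) hn) u
  simp only [LinearMap.compMultilinearMap_apply, MultilinearMap.sum_apply,
    MultilinearMap.compLinearMap_apply] at h
  rw [lDelta_eq, ljac_eq, h]
  refine Finset.sum_congr rfl fun l _ => ?_
  rw [ljac_eq]
  congr 1
  funext i
  by_cases hil : i = l
  · subst hil
    rw [Function.update_self, if_pos rfl, ← lDelta_eq]
  · rw [Function.update_of_ne hil, if_neg hil]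
    rfl
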